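/- Let (R, <, +, 0) be a densely linearly ordered abelian group with the order topology, and let X ⊆ R be the union of n discrete sets X₁, …, Xₙ. For each ε > 0 define X(ε) = ⋃ᵢ { x ∈ Xᵢ : (x − ε, x + ε) ∩ Xᵢ = {x} }. Then {X(ε) : ε > 0} is an upward directed covering of X, and every X(ε) is a closed discrete subset of R. (For closedness and discreteness: given a ∈ R, choose δ > 0 with 2δ < ε; then any two points x ≤ y of (a−δ, a+δ) satisfy y ∈ (x−ε, x+ε), so (a−δ, a+δ) ∩ X(ε) ∩ Xᵢ has at most one element, hence (a−δ, a+δ) ∩ X(ε) has at most n elements.) -/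

import Mathlib

open Set Topology

/-- Points of `S` that are `ε`-isolated in `S`. -/
def isoPts {R : Type*} [AddCommGroup R] [LinearOrder R] [IsOrderedAddMonoid R] (S : Set R) (ε : R) : Set R :=
  {y ∈ S | Set.Ioo (y - ε) (y + ε) ∩ S = {y}}

lemma locFin_closed_disc {R : Type*} [TopologicalSpace R] [T1Space R] (A : Set R)
    (h : ∀ a : R, ∃ U : Set R, IsOpen U ∧ a ∈ U ∧ (U ∩ A).Finite) :
    IsClosed A ∧ ∀ x ∈ A, x ∉ closure (A \ {x}) := by
  have key : ∀ a : R, ∀ B : Set R, B ⊆ A → a ∉ B → a ∉ closure B := by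
    intro a B hBA haB hc
    obtain ⟨U, hUo, haU, hUf⟩ := h a
    have hfin : (U ∩ B).Finite := hUf.subset (inter_subset_inter_right _ hBA)
    have hV : IsOpen (U \ (U ∩ B)) := hUo.sdiff hfin.isClosed
    have haV : a ∈ U \ (U ∩ B) := ⟨haU, fun hx => haB hx.2⟩
    obtain ⟨y, hy1, hy2⟩ := (mem_closure_iff.mp hc) _ hV haV
    exact hy1.2 ⟨hy1.1, hy2⟩
  constructor
  · rw [← isOpen_compl_iff, isOpen_iff_mem_nhds]
    intro a ha
    have := key a A (subset_refl _) ha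
    rw [mem_closure_iff] at this
    push_neg at this
    obtain ⟨U, hUo, haU, hU⟩ := this
    exact Filter.mem_of_superset (hUo.mem_nhds haU)
      (fun y hy hyA => eq_empty_iff_forall_notMem.mp hU y ⟨hy, hyA⟩)
  · intro x _
    exact key x (A \ {x}) diff_subset (fun hx => hx.2 rfl)

theorem stmt7 {R : Type*} [AddCommGroup R] [LinearOrder R] [IsOrderedAddMonoid R] [DenselyOrdered R] [Nontrivial R]
    [TopologicalSpace R] [OrderTopology R]
    (n : ℕ) (X : Set R) (Xs : Fin n → Set R)
    (hdisc : ∀ i, ∀ x ∈ Xs i, x ∉ closure (Xs i \ {x}))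
    (hX : X = ⋃ i, Xs i) :
    (∀ x ∈ X, ∃ ε > (0 : R), x ∈ ⋃ i, isoPts (Xs i) ε) ∧
    (∀ ε > (0 : R), (⋃ i, isoPts (Xs i) ε) ⊆ X) ∧
    (∀ ε ε' : R, 0 < ε' → ε' ≤ ε → (⋃ i, isoPts (Xs i) ε) ⊆ ⋃ i, isoPts (Xs i) ε') ∧
    (∀ ε > (0 : R), IsClosed (⋃ i, isoPts (Xs i) ε) ∧
      ∀ x ∈ ⋃ i, isoPts (Xs i) ε, x ∉ closure ((⋃ i, isoPts (Xs i) ε) \ {x})) := by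
  refine ⟨?_, ?_, ?_, ?_⟩
  · -- covering
    intro x hx
    rw [hX, mem_iUnion] at hx
    obtain ⟨i, hxi⟩ := hx
    have hcl := hdisc i x hxi
    have : (closure (Xs i \ {x}))ᶜ ∈ 𝓝 x :=
      (isClosed_closure.isOpen_compl).mem_nhds hcl
    obtain ⟨l, u, ⟨hl, hu⟩, hIoo⟩ := mem_nhds_iff_exists_Ioo_subset.mp this
    · refine ⟨min (x - l) (u - x), lt_min (sub_pos.mpr hl) (sub_pos.mpr hu), ?_⟩
      set ε := min (x - l) (u - x)
      refine mem_iUnion.mpr ⟨i, hxi, ?_⟩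
      apply Subset.antisymm
      · rintro y ⟨⟨hy1, hy2⟩, hyS⟩
        by_contra hne
        have hyl : l < y :=
          lt_of_le_of_lt (le_sub_comm.mpr (min_le_left (x - l) (u - x))) hy1
        have hyu : y < u := by
          have h1 : x + ε ≤ x + (u - x) := add_le_add_right (min_le_right _ _) _
          have h2 : x + (u - x) = u := by abel
          exact lt_of_lt_of_le hy2 (h2 ▸ h1)
        exact hIoo ⟨hyl, hyu⟩ (subset_closure ⟨hyS, hne⟩)
      · rintro y rfl
        exact ⟨⟨by simp [sub_lt_self_iff, lt_min (sub_pos.mpr hl) (sub_pos.mpr hu)]; exact lt_min (sub_pos.mpr hl) (sub_pos.mpr hu),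
          by simp [lt_add_iff_pos_right, lt_min (sub_pos.mpr hl) (sub_pos.mpr hu)]; exact lt_min (sub_pos.mpr hl) (sub_pos.mpr hu)⟩, hxi⟩
  · intro ε _ y hy
    rw [mem_iUnion] at hy
    obtain ⟨i, hyi, _⟩ := hy
    rw [hX]
    exact mem_iUnion.mpr ⟨i, hyi⟩
  · intro ε ε' hε' hle y hy
    rw [mem_iUnion] at hy ⊢
    obtain ⟨i, hyi, heq⟩ := hy
    refine ⟨i, hyi, Subset.antisymm ?_ ?_⟩
    · intro z hz
      rw [← heq]
      exact ⟨⟨lt_of_le_of_lt (sub_le_sub_left hle _) hz.1.1,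
        lt_of_lt_of_le hz.1.2 (add_le_add_right hle _)⟩, hz.2⟩
    · rintro z rfl
      exact ⟨⟨sub_lt_self _ hε', lt_add_of_pos_right _ hε'⟩, hyi⟩
  · intro ε hε
    -- choose δ with δ + δ ≤ ε
    obtain ⟨c, hc0, hcε⟩ := exists_between hε
    set δ := min c (ε - c) with hδdef
    have hδ0 : 0 < δ := lt_min hc0 (sub_pos.mpr hcε)
    have hδδ : δ + δ ≤ ε := by
      calc δ + δ ≤ c + (ε - c) := add_le_add (min_le_left _ _) (min_le_right _ _)
      _ = ε := by abel
    apply locFin_closed_disc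
    intro a
    refine ⟨Ioo (a - δ) (a + δ), isOpen_Ioo,
      ⟨sub_lt_self _ hδ0, lt_add_of_pos_right _ hδ0⟩, ?_⟩
    have : Ioo (a - δ) (a + δ) ∩ (⋃ i, isoPts (Xs i) ε)
        = ⋃ i, Ioo (a - δ) (a + δ) ∩ isoPts (Xs i) ε := by
      rw [inter_iUnion]
    rw [this]
    apply Set.finite_iUnion
    intro i
    apply Set.Subsingleton.finite
    rintro x ⟨hxI, hxS, hxeq⟩ y ⟨hyI, hyS, hyeq⟩
    have hyx : y ∈ Ioo (x - ε) (x + ε) := by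
      constructor
      · have : x - ε ≤ x - (δ + δ) := sub_le_sub_left hδδ _
        refine lt_of_le_of_lt this ?_
        have h1 : x - (δ + δ) < (a + δ) - (δ + δ) := by
          exact sub_lt_sub_right hxI.2 _
        have h2 : (a + δ) - (δ + δ) = a - δ := by abel
        exact lt_of_lt_of_le (h2 ▸ h1) (le_of_lt hyI.1)
      · have : x + (δ + δ) ≤ x + ε := add_le_add_right hδδ _
        refine lt_of_lt_of_le ?_ this
        have h1 : (a - δ) + (δ + δ) < x + (δ + δ) := add_lt_add_left hxI.1 _
        have h2 : (a - δ) + (δ + δ) = a + δ := by abel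
        exact lt_trans hyI.2 (h2 ▸ h1)
    have : y ∈ ({x} : Set R) := hxeq ▸ ⟨hyx, hyS⟩
    exact (this.symm : x = y).symm ▸ rfl
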